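/- Let α, γ ∈ l¹(ℤ) with S_α the subdivision operator (S_α c)_k = ∑_ℓ α_{k-2ℓ} c_ℓ and D_γ the decimation operator (D_γ c)_k = ∑_ℓ γ_{k-ℓ} c_{2ℓ}. Then the detail d = (Id - S_α D_γ)c satisfies d_{2k} = 0 for all k ∈ ℤ and all c ∈ l∞(ℤ) if and only if γ * α_ev = δ, i.e. γ is the convolution inverse of the even part α_ev of α (where (α_ev)_k = α_{2k}). -/

import Mathlib

/-- The subdivision operator `(S_α c)_k = ∑_ℓ α_{k-2ℓ} c_ℓ`. -/
noncomputable def subdOp (α : ℤ → ℝ) (c : ℤ → ℝ) : ℤ → ℝ :=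
  fun k => ∑' l : ℤ, α (k - 2 * l) * c l

/-- The decimation operator `(D_γ c)_k = ∑_ℓ γ_{k-ℓ} c_{2ℓ}`. -/
noncomputable def decimOp (γ : ℤ → ℝ) (c : ℤ → ℝ) : ℤ → ℝ :=
  fun k => ∑' l : ℤ, γ (k - l) * c (2 * l)

/-- The detail `d = (Id - S_α D_γ) c` vanishes on even indices for every bounded
sequence `c` if and only if `γ` is the convolution inverse of the even part of `α`. -/
theorem detail_even_vanish_iff (α γ : ℤ → ℝ)
    (hα : Summable (fun k : ℤ => |α k|)) (hγ : Summable (fun k : ℤ => |γ k|)) :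
    (∀ c : ℤ → ℝ, (∃ M : ℝ, ∀ k : ℤ, |c k| ≤ M) →
        ∀ k : ℤ, c (2 * k) - subdOp α (decimOp γ c) (2 * k) = 0)
      ↔ (∀ k : ℤ, (∑' l : ℤ, γ l * α (2 * (k - l))) = if k = 0 then 1 else 0) := by
  constructor
  · intro H k
    set c : ℤ → ℝ := fun n => if n = 0 then 1 else 0 with hc
    have hcb : ∃ M : ℝ, ∀ k : ℤ, |c k| ≤ M := by
      refine ⟨1, fun k => ?_⟩
      by_cases h : k = 0 <;> simp [hc, h]
    have hdc : decimOp γ c = γ := by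
      funext l
      have : (∑' m : ℤ, γ (l - m) * c (2 * m)) = γ (l - 0) * c (2 * 0) := by
        refine tsum_eq_single 0 fun m hm => ?_
        have : (2 : ℤ) * m ≠ 0 := by omega
        simp [hc, this]
      simpa [hc, decimOp] using this
    have h := H c hcb k
    rw [hdc] at h
    have h2 : subdOp α γ (2 * k) = ∑' l : ℤ, γ l * α (2 * (k - l)) := by
      unfold subdOp
      congr 1; funext l; ring_nf
    rw [h2] at h
    have hck : c (2 * k) = if k = 0 then 1 else 0 := by
      by_cases h : k = 0 <;> simp [hc, h]
    rw [hck] at h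
    linarith [h]
  · intro H c hcb k
    obtain ⟨M, hM⟩ := hcb
    set g : ℤ × ℤ → ℝ := fun p => α (2 * k - 2 * p.1) * (γ (p.1 - p.2) * c (2 * p.2)) with hgdef
    -- summability of g
    have einj : Function.Injective (fun p : ℤ × ℤ => (2 * k - 2 * p.1, p.1 - p.2)) := by
      intro p q h
      simp only [Prod.mk.injEq] at h
      ext <;> omega
    have hprod : Summable (fun p : ℤ × ℤ => |α p.1| * |γ p.2| * M) :=
      (hα.mul_of_nonneg hγ (fun _ => abs_nonneg _) (fun _ => abs_nonneg _)).mul_right M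
    have hbound : Summable (fun p : ℤ × ℤ => |α (2 * k - 2 * p.1)| * |γ (p.1 - p.2)| * M) := by
      have h := hprod.comp_injective einj
      exact h
    have hg : Summable g := by
      refine Summable.of_norm_bounded hbound fun p => ?_
      rw [Real.norm_eq_abs, hgdef]
      simp only [abs_mul]
      rw [← mul_assoc]
      exact mul_le_mul_of_nonneg_left (hM _) (by positivity)
    have key : subdOp α (decimOp γ c) (2 * k) = c (2 * k) := by
      have step1 : subdOp α (decimOp γ c) (2 * k) = ∑' (l : ℤ) (m : ℤ), g (l, m) := by
        unfold subdOp decimOp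
        congr 1; funext l
        rw [← tsum_mul_left]
      have step2 : (∑' (l : ℤ) (m : ℤ), g (l, m)) = ∑' (m : ℤ) (l : ℤ), g (l, m) :=
        (Summable.tsum_comm (f := fun l m => g (l, m)) (by exact hg)).symm
      have step3 : ∀ m : ℤ, (∑' l : ℤ, g (l, m)) =
          (if k - m = 0 then (1:ℝ) else 0) * c (2 * m) := by
        intro m
        have e1 : (∑' l : ℤ, g (l, m)) = (∑' l : ℤ, α (2 * k - 2 * l) * γ (l - m)) * c (2 * m) := by
          rw [← tsum_mul_right]
          congr 1; funext l; rw [hgdef]; ring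
        have e2 : (∑' l : ℤ, α (2 * k - 2 * l) * γ (l - m)) =
            ∑' j : ℤ, γ j * α (2 * ((k - m) - j)) := by
          rw [← (Equiv.addLeft m).tsum_eq (fun l => α (2 * k - 2 * l) * γ (l - m))]
          congr 1; funext j
          simp only [Equiv.coe_addLeft]
          ring_nf
        rw [e1, e2, H (k - m)]
      have step4 : (∑' m : ℤ, (if k - m = 0 then (1:ℝ) else 0) * c (2 * m)) = c (2 * k) := by
        rw [tsum_eq_single k (fun m hm => by simp [sub_ne_zero.mpr (Ne.symm hm)])]
        simp
      calc subdOp α (decimOp γ c) (2 * k) = ∑' (l : ℤ) (m : ℤ), g (l, m) := step1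
        _ = ∑' (m : ℤ) (l : ℤ), g (l, m) := step2
        _ = ∑' m : ℤ, (if k - m = 0 then (1:ℝ) else 0) * c (2 * m) := by
            congr 1; funext m; exact step3 m
        _ = c (2 * k) := step4
    rw [key]; ring
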